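/- There exists a subdivision of T_ω which is not a dominating graph. Specifically, if each edge e(n) of T_ω (under a fixed enumeration e : ω → E(T_ω)) is subdivided exactly n times, the resulting tree T is not dominating. -/

import Mathlib

open Filter Cardinal

/-- `f` is eventually dominated by `g`: `f n ≤ g n` for all but finitely many `n`. -/
def EvDom (f g : ℕ → ℕ) : Prop := ∀ᶠ n in Filter.atTop, f n ≤ g n

/-- A ray in `G`: an injective one-way infinite path. -/
def IsRay {X : Type} (G : SimpleGraph X) (R : ℕ → X) : Prop :=
  Function.Injective R ∧ ∀ n, G.Adj (R n) (R (n + 1))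

/-- A graph is dominating if some labelling makes the labels along rays a dominating family. -/
def DominatingGraph {X : Type} (G : SimpleGraph X) : Prop :=
  ∃ L : X → ℕ, ∀ f : ℕ → ℕ, ∃ R : ℕ → X, IsRay G R ∧ EvDom f (L ∘ R)

/-- `F` is a dominating family of functions. -/
def DomFamily (F : Set (ℕ → ℕ)) : Prop := ∀ g : ℕ → ℕ, ∃ f ∈ F, EvDom g f

/-- `F` is a bounded family of functions. -/
def BddFamily (F : Set (ℕ → ℕ)) : Prop := ∃ g : ℕ → ℕ, ∀ f ∈ F, EvDom f g

/-- The dominating number 𝔡. -/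
noncomputable def dNum : Cardinal := sInf {c | ∃ F : Set (ℕ → ℕ), DomFamily F ∧ #F = c}

/-- The bounding number 𝔟. -/
noncomputable def bNum : Cardinal := sInf {c | ∃ F : Set (ℕ → ℕ), ¬ BddFamily F ∧ #F = c}

/-- A branch vertex: one of countably infinite degree. -/
def BranchVtx {X : Type} (T : SimpleGraph X) (v : X) : Prop := #(T.neighborSet v) = ℵ₀

/-- `T` is a copy of `T_ω`: a tree all of whose vertices have countably infinite degree. -/
def IsTOmega {X : Type} (T : SimpleGraph X) : Prop :=
  T.IsTree ∧ ∀ v, BranchVtx T v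

/-- `T` is a subdivision of `T_ω`: a tree with all degrees 2 or ℵ₀ in which every ray
meets a branch vertex. -/
def IsSubdivTOmega {X : Type} (T : SimpleGraph X) : Prop :=
  T.IsTree ∧ (∀ v, #(T.neighborSet v) = 2 ∨ BranchVtx T v) ∧
    ∀ R : ℕ → X, IsRay T R → ∃ n, BranchVtx T (R n)

/-- `W` is a subdivided edge of `T` (from a branch vertex to a branch vertex, with
no branch vertices in its interior). -/
def SubdividedEdge {X : Type} (T : SimpleGraph X) {x y : X} (W : T.Walk x y) : Prop :=
  W.IsPath ∧ BranchVtx T x ∧ BranchVtx T y ∧ 0 < W.length ∧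
    ∀ v ∈ W.support, v ≠ x → v ≠ y → ¬ BranchVtx T v

/-- `T` is a uniform subdivision of `T_ω`: it has a root `r` such that at every branch
vertex `x`, all subdivided edges at `x` not towards `r` have the same length. -/
def UniformSubdivTOmega {X : Type} (T : SimpleGraph X) : Prop :=
  IsSubdivTOmega T ∧ ∃ r : X, BranchVtx T r ∧
    ∀ (x y z : X) (W : T.Walk x y) (W' : T.Walk x z),
      SubdividedEdge T W → SubdividedEdge T W' →
      (∀ P : T.Walk x r, P.IsPath → y ∉ P.support) →
      (∀ P : T.Walk x r, P.IsPath → z ∉ P.support) →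
      W.length = W'.length

/-- `Ps` is a family of disjoint paths starting at `x`: each member is a path from `x`,
and distinct members share no vertex other than `x`. -/
def DisjPathFam {X : Type} (G : SimpleGraph X) (x : X)
    (Ps : Set (Σ y : X, G.Walk x y)) : Prop :=
  (∀ P ∈ Ps, Sigma.snd P |>.IsPath) ∧
    ∀ P ∈ Ps, ∀ Q ∈ Ps, P ≠ Q →
      ∀ v, v ∈ (Sigma.snd P).support → v ∈ (Sigma.snd Q).support → v = x

namespace Stmt4Aux

def enc : List ℕ → ℕ
  | [] => 0
  | a :: l => Nat.pair a (enc l) + 1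

def dec : ℕ → List ℕ
  | 0 => []
  | (m + 1) => (Nat.unpair m).1 :: dec (Nat.unpair m).2
decreasing_by exact Nat.lt_succ_of_le (Nat.unpair_right_le m)

lemma dec_enc : ∀ l, dec (enc l) = l
  | [] => by rw [enc, dec]
  | a :: l => by
      rw [enc, dec]
      simp [Nat.unpair_pair, dec_enc l]

def len (s : List ℕ) : ℕ := enc s + 1

lemma len_pos (s : List ℕ) : 0 < len s := Nat.succ_pos _

abbrev XV : Type := {p : List ℕ × ℕ // p.2 < len p.1}

instance : Countable XV := by
  unfold XV; infer_instance

def up (p : XV) : XV :=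
  if h : p.1.2 + 1 < len p.1.1 then ⟨(p.1.1, p.1.2 + 1), h⟩
  else ⟨(p.1.1.tail, 0), len_pos _⟩

def TT : SimpleGraph XV where
  Adj p q := p ≠ q ∧ (up p = q ∨ up q = p)
  symm := ⟨fun p q ⟨h1, h2⟩ => ⟨h1.symm, h2.symm⟩⟩
  loopless := ⟨fun p ⟨h1, _⟩ => h1 rfl⟩

lemma adj_def {p q : XV} : TT.Adj p q ↔ p ≠ q ∧ (up p = q ∨ up q = p) := Iff.rfl

def D : List ℕ → ℕ
  | [] => 0
  | a :: l => D l + len (a :: l)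

def depth (p : XV) : ℕ := D p.1.1 - p.1.2

def root : XV := ⟨(([] : List ℕ), 0), len_pos _⟩

lemma eq_root {p : XV} (h : p.1.1 = []) : p = root := by
  have h2 := p.2
  rw [h] at h2
  have h3 : p.1.2 = 0 := by
    have : len ([] : List ℕ) = 1 := rfl
    omega
  apply Subtype.ext
  apply Prod.ext h h3

lemma ne_nil_of_ne_root {p : XV} (h : p ≠ root) : p.1.1 ≠ [] :=
  fun hn => h (eq_root hn)

lemma len_le_D {s : List ℕ} (h : s ≠ []) : len s ≤ D s := by
  cases s with
  | nil => exact absurd rfl h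
  | cons a l => rw [D]; omega

lemma depth_up {p : XV} (h : p ≠ root) : depth (up p) + 1 = depth p := by
  obtain ⟨⟨s, j⟩, hj⟩ := p
  have hs : s ≠ [] := ne_nil_of_ne_root h
  have hD : len s ≤ D s := len_le_D hs
  have hj' : j < len s := hj
  rw [up]
  split
  · next h1 =>
    have h1' : j + 1 < len s := h1
    show D s - (j + 1) + 1 = D s - j
    omega
  · next h1 =>
    have h1' : ¬ (j + 1 < len s) := h1
    cases s with
    | nil => exact absurd rfl hs
    | cons a l =>
      show D ((a :: l).tail) - 0 + 1 = D (a :: l) - j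
      have hDD : D (a :: l) = D l + len (a :: l) := rfl
      simp only [List.tail_cons]
      omega

lemma eq_root_of_depth_eq_zero {p : XV} (h : depth p = 0) : p = root := by
  by_contra hne
  obtain ⟨⟨s, j⟩, hj⟩ := p
  have hs : s ≠ [] := ne_nil_of_ne_root hne
  have h1 : len s ≤ D s := len_le_D hs
  have h2 : D s - j = 0 := h
  have hj' : j < len s := hj
  omega

lemma up_root : up root = root := by
  rw [up]
  split
  · next h1 =>
    exfalso
    have : len ([] : List ℕ) = 1 := rfl
    simp only [root] at h1
    omega
  · rfl

lemma adj_up {p : XV} (h : p ≠ root) : TT.Adj p (up p) := by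
  refine ⟨?_, Or.inl rfl⟩
  intro heq
  have h2 := depth_up h
  rw [← heq] at h2
  omega

lemma adj_cases {p q : XV} (h : TT.Adj p q) :
    (p ≠ root ∧ up p = q) ∨ (q ≠ root ∧ up q = p) := by
  rcases h.2 with h2 | h2
  · left
    refine ⟨?_, h2⟩
    rintro rfl
    rw [up_root] at h2
    exact h.1 h2
  · right
    refine ⟨?_, h2⟩
    rintro rfl
    rw [up_root] at h2
    exact h.1 h2.symm

lemma reach (p : XV) : TT.Reachable p root := by
  have key : ∀ (n : ℕ) (p : XV), depth p = n → TT.Reachable p root := by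
    intro n
    induction n using Nat.strong_induction_on with
    | _ n ih =>
      intro p hd
      rcases eq_or_ne p root with rfl | hp
      · exact SimpleGraph.Reachable.refl _
      · have h1 := depth_up hp
        have h2 : depth (up p) < n := by omega
        exact (adj_up hp).reachable.trans (ih (depth (up p)) h2 (up p) rfl)
  exact key (depth p) p rfl

lemma connected : TT.Connected := by
  rw [SimpleGraph.connected_iff]
  exact ⟨fun u v => (reach u).trans (reach v).symm, ⟨root⟩⟩

lemma up_eq_of_adj_depth_le {p q : XV} (h : TT.Adj p q) (hle : depth q ≤ depth p) :
    up p = q := by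
  rcases adj_cases h with ⟨_, h2⟩ | ⟨hr, h2⟩
  · exact h2
  · exfalso
    have := depth_up hr
    rw [h2] at this
    omega

lemma acyclic : TT.IsAcyclic := by
  classical
  intro v c hc
  obtain ⟨u, hu, hmax⟩ := Finset.exists_max_image c.support.toFinset depth
    ⟨v, List.mem_toFinset.mpr c.start_mem_support⟩
  rw [List.mem_toFinset] at hu
  have hmax' : ∀ w ∈ c.support, depth w ≤ depth u := fun w hw =>
    hmax w (List.mem_toFinset.mpr hw)
  have hc' := hc.rotate hu
  have hrot := SimpleGraph.Walk.support_rotate c u hu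
  have htail : ∀ w ∈ (c.rotate u hu).support.tail, depth w ≤ depth u := fun w hw =>
    hmax' w (List.mem_of_mem_tail (hrot.mem_iff.mp hw))
  revert hc' htail
  generalize c.rotate u hu = c'
  intro hc' htail
  cases c' with
  | nil => exact hc'.ne_nil rfl
  | @cons _ b _ hadj p =>
    have hsupp : (SimpleGraph.Walk.cons hadj p).support.tail = p.support := by
      simp [SimpleGraph.Walk.support_cons]
    have hb : depth b ≤ depth u := htail b (by rw [hsupp]; exact p.start_mem_support)
    have hub : up u = b := up_eq_of_adj_depth_le hadj hb
    obtain ⟨x, q, h', heq⟩ := SimpleGraph.Walk.exists_cons_eq_concat hadj p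
    have hxq : x ∈ q.support := q.end_mem_support
    have hxmem : x ∈ p.support := by
      have h1 : x ∈ (SimpleGraph.Walk.cons hadj p).support := by
        rw [heq, SimpleGraph.Walk.support_concat]
        exact List.mem_append_left _ hxq
      rw [SimpleGraph.Walk.support_cons] at h1
      rcases List.mem_cons.mp h1 with h1 | h1
      · exact absurd h1 h'.ne
      · exact h1
    have hxd : depth x ≤ depth u := htail x (by rw [hsupp]; exact hxmem)
    have hux : up u = x := up_eq_of_adj_depth_le h'.symm hxd
    have hbx : b = x := by rw [← hub, hux]
    have hedge : s(u, b) :: p.edges = q.edges ++ [s(u, b)] := by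
      have h1 : (SimpleGraph.Walk.cons hadj p).edges = (q.concat h').edges := by
        rw [heq]
      rw [SimpleGraph.Walk.edges_cons, SimpleGraph.Walk.edges_concat] at h1
      rw [h1, List.concat_eq_append]
      congr 2
      rw [← hbx, Sym2.eq_swap]
    have hlen := hc'.three_le_length
    rw [SimpleGraph.Walk.length_cons] at hlen
    have hplen : p.edges.length = p.length := p.length_edges
    have hnodup : (s(u, b) :: p.edges).Nodup := by
      have := hc'.edges_nodup
      rwa [SimpleGraph.Walk.edges_cons] at this
    cases hq : q.edges with
    | nil =>
      rw [hq] at hedge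
      have := congrArg List.length hedge
      simp at this
      have h3 := congrArg List.length hedge
      simp only [List.length_cons, List.length_append, List.length_nil, List.length_singleton] at h3
      omega
    | cons e t =>
      rw [hq] at hedge
      simp only [List.cons_append, List.cons.injEq] at hedge
      have hmem : s(u, b) ∈ p.edges := by
        rw [hedge.2]
        exact List.mem_append_right _ (List.mem_singleton_self _)
      exact (List.nodup_cons.mp hnodup).1 hmem

lemma isTree : TT.IsTree := ⟨connected, acyclic⟩

/-- Characterization of up q = p for interior p. -/
lemma up_eq_interior {s : List ℕ} {j : ℕ} (hj : j < len s) (hj1 : 1 ≤ j) (q : XV)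
    (h : up q = ⟨(s, j), hj⟩) : q = ⟨(s, j - 1), show j - 1 < len s by omega⟩ := by
  obtain ⟨⟨t, i⟩, hi⟩ := q
  rw [up] at h
  split at h
  · next h1 =>
    have h2 : t = s ∧ i + 1 = j := by
      have := congrArg (fun r : XV => r.1) h
      simp only at this
      exact ⟨congrArg Prod.fst this, congrArg Prod.snd this⟩
    apply Subtype.ext
    simp only
    rw [h2.1]
    have : i = j - 1 := by omega
    rw [this]
  · next h1 =>
    exfalso
    have h2 : (0 : ℕ) = j := by
      have := congrArg (fun r : XV => r.1.2) h
      simpa using this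
    omega

/-- Neighbor set of an interior vertex. -/
lemma interior_nbhd {s : List ℕ} {j : ℕ} (hj : j < len s) (hj1 : 1 ≤ j) :
    TT.neighborSet ⟨(s, j), hj⟩ = {⟨(s, j - 1), show j - 1 < len s by omega⟩, up ⟨(s, j), hj⟩} := by
  ext q
  constructor
  · intro hq
    rcases (hq : TT.Adj _ q).2 with h2 | h2
    · exact Or.inr h2.symm
    · exact Or.inl (up_eq_interior hj hj1 q h2)
  · intro hq
    rcases hq with rfl | rfl
    · refine ⟨?_, Or.inr ?_⟩
      · intro h
        have hh : j = j - 1 := congrArg (fun r : XV => r.1.2) h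
        omega
      · rw [up]
        split
        · next h1 =>
          apply Subtype.ext
          show ((s : List ℕ), j - 1 + 1) = (s, j)
          rw [Nat.sub_add_cancel hj1]
        · next h1 =>
          exfalso
          have h1' : ¬ (j - 1 + 1 < len s) := h1
          omega
    · exact adj_up (fun h => by
        have hh : s = [] := congrArg (fun r : XV => r.1.1) h
        rw [hh] at hj
        have hlen : len ([] : List ℕ) = 1 := rfl
        omega)

lemma interior_card {s : List ℕ} {j : ℕ} (hj : j < len s) (hj1 : 1 ≤ j) :
    #(TT.neighborSet ⟨(s, j), hj⟩) = 2 := by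
  rw [interior_nbhd hj hj1]
  have hne : (⟨(s, j - 1), show j - 1 < len s by omega⟩ : XV) ∉ ({up ⟨(s, j), hj⟩} : Set XV) := by
    rw [Set.mem_singleton_iff, up]
    split
    · next h1 =>
      intro h
      have hh : j - 1 = j + 1 := congrArg (fun r : XV => r.1.2) h
      omega
    · next h1 =>
      intro h
      have h2 : s = s.tail := congrArg (fun r : XV => r.1.1) h
      have hs : s ≠ [] := by
        intro hnil
        rw [hnil] at hj
        have hlen : len ([] : List ℕ) = 1 := rfl
        omega
      cases s with
      | nil => exact hs rfl
      | cons a l =>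
        simp only [List.tail_cons] at h2
        have := congrArg List.length h2
        simp at this
  rw [Set.insert_eq, Cardinal.mk_union_of_disjoint (by simpa using hne),
    Cardinal.mk_singleton, Cardinal.mk_singleton]
  norm_num

/-- The child injection at a vertex with j = 0. -/
def child (s : List ℕ) (hs : (0 : ℕ) < len s) (k : ℕ) : XV :=
  ⟨(k :: s, len (k :: s) - 1), show len (k :: s) - 1 < len (k :: s) by
    have := len_pos (k :: s); omega⟩

lemma child_adj (s : List ℕ) (hs : (0 : ℕ) < len s) (k : ℕ) :
    TT.Adj ⟨(s, 0), hs⟩ (child s hs k) := by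
  constructor
  · intro h
    have := congrArg (fun r : XV => r.1.1) h
    simp only [child] at this
    have := congrArg List.length this
    simp at this
  · right
    rw [child, up]
    split
    · next h1 =>
      exfalso
      have h1' : len (k :: s) - 1 + 1 < len (k :: s) := h1
      have := len_pos (k :: s)
      omega
    · next h1 =>
      apply Subtype.ext
      simp

lemma branch_card (s : List ℕ) (hs : (0 : ℕ) < len s) :
    #(TT.neighborSet ⟨(s, 0), hs⟩) = ℵ₀ := by
  apply le_antisymm
  · exact Cardinal.mk_le_aleph0
  · rw [← Cardinal.mk_nat]
    apply Cardinal.mk_le_of_injective (f := fun k =>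
      ⟨child s hs k, child_adj s hs k⟩)
    intro k1 k2 h
    have h2 : k1 :: s = k2 :: s :=
      congrArg (fun r : TT.neighborSet ⟨(s, 0), hs⟩ => (r : XV).1.1) h
    simpa using h2

lemma branch_iff (p : XV) : BranchVtx TT p ↔ p.1.2 = 0 := by
  obtain ⟨⟨s, j⟩, hj⟩ := p
  show BranchVtx TT ⟨(s, j), hj⟩ ↔ j = 0
  constructor
  · intro h
    by_contra hne
    have h1 : 1 ≤ j := by omega
    rw [BranchVtx, interior_card hj h1] at h
    have h2 : (2 : Cardinal) < ℵ₀ := by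
      have := Cardinal.nat_lt_aleph0.{0} 2
      simpa using this
    exact absurd h h2.ne
  · intro h
    subst h
    exact branch_card s hj



lemma exists_down {R : ℕ → XV} (hinj : Function.Injective R)
    (hadj : ∀ n, TT.Adj (R n) (R (n + 1))) :
    ∃ N, ∀ n ≥ N, up (R (n + 1)) = R n := by
  have hfirst : ∃ N, up (R (N + 1)) = R N := by
    by_contra hno
    push_neg at hno
    have hup : ∀ n, up (R n) = R (n + 1) := by
      intro n
      rcases (hadj n).2 with h | h
      · exact h
      · exact absurd h (hno n)
    have hnr : ∀ n, R n ≠ root := by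
      intro n h
      have h2 := hup n
      rw [h, up_root] at h2
      exact (hadj n).1 (by rw [h, h2])
    have hdec : ∀ n, depth (R (n + 1)) + 1 = depth (R n) := by
      intro n; rw [← hup n]; exact depth_up (hnr n)
    have hsum : ∀ n, depth (R n) + n ≤ depth (R 0) := by
      intro n
      induction n with
      | zero => omega
      | succ k ih => have := hdec k; omega
    have := hsum (depth (R 0) + 1)
    omega
  obtain ⟨N, hN⟩ := hfirst
  refine ⟨N, ?_⟩
  intro n hn
  induction n, hn using Nat.le_induction with
  | base => exact hN
  | succ n hn ih =>
    rcases (hadj (n + 1)).2 with h | h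
    · exfalso
      have h2 : R (n + 2) = R n := by rw [← h, ih]
      have := hinj h2
      omega
    · exact h

lemma step_succ {R : ℕ → XV} {n : ℕ} (hd : up (R (n + 1)) = R n) :
    ((R (n + 1)).1.1 = (R n).1.1 ∧ (R (n + 1)).1.2 + 1 = (R n).1.2) ∨
    ((R n).1.2 = 0 ∧ (R (n + 1)).1.2 = enc (R (n + 1)).1.1 ∧
      (R (n + 1)).1.1.tail = (R n).1.1) := by
  rw [up] at hd
  split at hd
  · next h1 =>
    left
    have ha := congrArg (fun r : XV => r.1.1) hd
    have hb := congrArg (fun r : XV => r.1.2) hd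
    exact ⟨ha, hb⟩
  · next h1 =>
    right
    have h2 : (0 : ℕ) = (R n).1.2 := congrArg (fun r : XV => r.1.2) hd
    have h3 : (R (n + 1)).1.1.tail = (R n).1.1 := congrArg (fun r : XV => r.1.1) hd
    have h4 : ¬ ((R (n + 1)).1.2 + 1 < len (R (n + 1)).1.1) := h1
    have h5 := (R (n + 1)).2
    have h6 : len (R (n + 1)).1.1 = enc (R (n + 1)).1.1 + 1 := rfl
    exact ⟨h2.symm, by omega, h3⟩

lemma hits_zero {R : ℕ → XV} {N : ℕ} (hdown : ∀ n ≥ N, up (R (n + 1)) = R n) :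
    ∀ m ≥ N, ∃ n ≥ m, (R n).1.2 = 0 := by
  have key : ∀ (j : ℕ) (m : ℕ), m ≥ N → (R m).1.2 = j → ∃ n ≥ m, (R n).1.2 = 0 := by
    intro j
    induction j using Nat.strong_induction_on with
    | _ j ih =>
      intro m hm hj
      rcases Nat.eq_zero_or_pos j with rfl | hpos
      · exact ⟨m, le_refl m, hj⟩
      · rcases step_succ (hdown m hm) with ⟨_, h2⟩ | ⟨h1, _, _⟩
        · have hlt : (R (m + 1)).1.2 < j := by omega
          obtain ⟨n, hn, h0⟩ := ih _ hlt (m + 1) (by omega) rfl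
          exact ⟨n, by omega, h0⟩
        · exact ⟨m, le_refl m, h1⟩
  intro m hm
  exact key ((R m).1.2) m hm rfl

lemma invariant {R : ℕ → XV} {N : ℕ} (hdown : ∀ n ≥ N, up (R (n + 1)) = R n)
    {n₀ : ℕ} (hn₀ : n₀ ≥ N) (h0 : (R n₀).1.2 = 0) :
    ∀ n ≥ n₀ + 1, enc (R n).1.1 ≤ n + (R n).1.2 := by
  intro n hn
  induction n, hn using Nat.le_induction with
  | base =>
    rcases step_succ (hdown n₀ hn₀) with ⟨_, h2⟩ | ⟨_, h2, _⟩
    · omega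
    · omega
  | succ n hn ih =>
    have hnN : n ≥ N := by omega
    rcases step_succ (hdown n hnN) with ⟨h1, h2⟩ | ⟨h1, h2, _⟩
    · rw [h1]; omega
    · omega

lemma ray_meets_branch (R : ℕ → XV) (hR : IsRay TT R) : ∃ n, (R n).1.2 = 0 := by
  obtain ⟨N, hdown⟩ := exists_down hR.1 hR.2
  obtain ⟨n, _, h0⟩ := hits_zero hdown N (le_refl N)
  exact ⟨n, h0⟩

lemma not_dominating : ¬ DominatingGraph TT := by
  rintro ⟨Lb, hLb⟩
  set FF : ℕ → ℕ := fun m => Lb ⟨(dec m, 0), len_pos _⟩ with hFF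
  obtain ⟨R, ⟨hinj, hadj⟩, hdom⟩ :=
    hLb (fun n => (Finset.range (n + 1)).sup FF + 1)
  obtain ⟨N, hdown⟩ := exists_down hinj hadj
  obtain ⟨n₀, hn₀N, h00⟩ := hits_zero hdown N (le_refl N)
  rw [EvDom, eventually_atTop] at hdom
  obtain ⟨N', hN'⟩ := hdom
  obtain ⟨n, hn, h0⟩ := hits_zero hdown (max (n₀ + 1) N')
    (by have := le_max_left (n₀ + 1) N'; omega)
  have hinv := invariant hdown hn₀N h00 n
    (le_trans (le_max_left _ _) hn)
  rw [h0] at hinv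
  have hRn : R n = ⟨(dec (enc (R n).1.1), 0), len_pos _⟩ := by
    apply Subtype.ext
    apply Prod.ext
    · exact (dec_enc _).symm
    · exact h0
  have hL : Lb (R n) = FF (enc (R n).1.1) := congrArg Lb hRn
  have hle : FF (enc (R n).1.1) ≤ (Finset.range (n + 1)).sup FF :=
    Finset.le_sup (Finset.mem_range.mpr (by omega))
  have hfn := hN' n (le_trans (le_max_right _ _) hn)
  simp only [Function.comp_apply] at hfn
  rw [hL] at hfn
  omega

end Stmt4Aux

/-- There exists a subdivision of `T_ω` which is not a dominating graph. -/
theorem stmt4 : ∃ (X : Type) (T : SimpleGraph X), IsSubdivTOmega T ∧ ¬ DominatingGraph T := by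
  refine ⟨Stmt4Aux.XV, Stmt4Aux.TT, ⟨Stmt4Aux.isTree, ?_, ?_⟩, Stmt4Aux.not_dominating⟩
  · intro v
    rcases Nat.eq_zero_or_pos v.1.2 with h | h
    · right
      rw [Stmt4Aux.branch_iff]
      exact h
    · left
      obtain ⟨⟨s, j⟩, hj⟩ := v
      exact Stmt4Aux.interior_card hj h
  · intro R hR
    obtain ⟨n, h0⟩ := Stmt4Aux.ray_meets_branch R hR
    exact ⟨n, (Stmt4Aux.branch_iff _).mpr h0⟩
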